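/- arXiv:1612.08881 — 3 statements merged into one kernel-verified Lean document; each statement's English description precedes it below -/
import Mathlib

section
/- For the cubic Gauss sum S(B/Q) = (1/Q) Σ_{r=0}^{Q-1} e(-2πi B r³/Q) with gcd(B,Q)=1, there exist constants C > 0 and δ > 0 such that |S(B/Q)| ≤ C·Q^(-δ) for all Q ≥ 1. -/
open Finset Complex

/-! Auxiliary definitions: the additive character `e(a/N)` on ℤ and on `ZMod N`. -/

noncomputable def eN (N : ℕ) (a : ℤ) : ℂ :=
  Complex.exp (2 * Real.pi * Complex.I * (a : ℂ) / (N : ℂ))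

lemma eN_add (N : ℕ) (a b : ℤ) : eN N (a + b) = eN N a * eN N b := by
  rw [eN, eN, eN, ← Complex.exp_add]
  congr 1
  push_cast
  ring

lemma eN_one_of_dvd {N : ℕ} (hN : 0 < N) {a : ℤ} (h : (N : ℤ) ∣ a) : eN N a = 1 := by
  obtain ⟨t, rfl⟩ := h
  rw [eN]
  have hNC : (N : ℂ) ≠ 0 := Nat.cast_ne_zero.mpr hN.ne'
  have : 2 * (Real.pi : ℂ) * Complex.I * ((N : ℤ) * t : ℤ) / N
      = (t : ℂ) * (2 * Real.pi * Complex.I) := by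
    push_cast
    field_simp
  rw [this, Complex.exp_int_mul_two_pi_mul_I]

lemma norm_eN {N : ℕ} (hN : 0 < N) (a : ℤ) : ‖eN N a‖ = 1 := by
  have : 2 * (Real.pi : ℂ) * Complex.I * (a : ℂ) / (N : ℂ)
      = ((2 * Real.pi * a / N : ℝ) : ℂ) * Complex.I := by
    push_cast
    ring
  rw [eN, this, Complex.norm_exp_ofReal_mul_I]

lemma conj_eN (N : ℕ) (a : ℤ) : (starRingEnd ℂ) (eN N a) = eN N (-a) := by
  rw [eN, eN, ← Complex.exp_conj]
  congr 1
  simp only [map_div₀, map_mul, Complex.conj_I, map_ofNat, Complex.conj_ofReal, map_intCast,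
    map_natCast]
  push_cast
  ring

noncomputable def psiC (N : ℕ) [NeZero N] (x : ZMod N) : ℂ := eN N (x.val : ℤ)

lemma psiC_intCast (N : ℕ) [NeZero N] (a : ℤ) : psiC N ((a : ℤ) : ZMod N) = eN N a := by
  rw [psiC, ZMod.val_intCast]
  have : a = a % N + N * (a / N) := by
    have := Int.emod_add_mul_ediv a N
    linarith
  nth_rewrite 2 [this]
  rw [eN_add, eN_one_of_dvd (Nat.pos_of_ne_zero (NeZero.ne N)) ⟨a / N, rfl⟩, mul_one]

lemma natCast_val_self (N : ℕ) [NeZero N] (x : ZMod N) : ((x.val : ℕ) : ZMod N) = x := by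
  simp [ZMod.natCast_val, ZMod.cast_id]

lemma psiC_eq (N : ℕ) [NeZero N] (x : ZMod N) : psiC N x = eN N (x.val : ℤ) := rfl

lemma psiC_add (N : ℕ) [NeZero N] (x y : ZMod N) : psiC N (x + y) = psiC N x * psiC N y := by
  have hx : x = ((x.val : ℤ) : ZMod N) := by push_cast [natCast_val_self]; rfl
  have hy : y = ((y.val : ℤ) : ZMod N) := by push_cast [natCast_val_self]; rfl
  rw [hx, hy, ← Int.cast_add, psiC_intCast, psiC_intCast, psiC_intCast, eN_add]

lemma psiC_zero (N : ℕ) [NeZero N] : psiC N 0 = 1 := by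
  have : ((0 : ℤ) : ZMod N) = 0 := by push_cast; rfl
  rw [← this, psiC_intCast, eN]
  simp

lemma norm_psiC (N : ℕ) [NeZero N] (x : ZMod N) : ‖psiC N x‖ = 1 :=
  norm_eN (Nat.pos_of_ne_zero (NeZero.ne N)) _

lemma conj_psiC (N : ℕ) [NeZero N] (x : ZMod N) :
    (starRingEnd ℂ) (psiC N x) = psiC N (-x) := by
  rw [psiC, conj_eN, ← psiC_intCast]
  congr 1
  push_cast [natCast_val_self]
  rfl

lemma psiC_ne_one (N : ℕ) [NeZero N] {c : ZMod N} (hc : c ≠ 0) : psiC N c ≠ 1 := by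
  rw [psiC, eN]
  intro h
  obtain ⟨n, hn⟩ := Complex.exp_eq_one_iff.mp h
  have hNC : (N : ℂ) ≠ 0 := Nat.cast_ne_zero.mpr (NeZero.ne N)
  have hpi : (2 * (Real.pi : ℂ) * Complex.I) ≠ 0 := by
    simp [Real.pi_ne_zero, Complex.I_ne_zero]
  rw [div_eq_iff hNC] at hn
  have h2 : ((c.val : ℤ) : ℂ) = (n : ℂ) * N := by
    apply mul_left_cancel₀ hpi
    linear_combination hn
  have h3 : ((c.val : ℤ) : ℝ) = (n : ℝ) * N := by exact_mod_cast congrArg Complex.re h2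
  have hv : 0 < c.val := (ZMod.val_pos (n := N)).mpr hc
  have hvl : c.val < N := ZMod.val_lt c
  have hcast : (c.val : ℤ) = n * N := by exact_mod_cast h3
  have h0 : (0:ℤ) < n * N := by rw [← hcast]; exact_mod_cast hv
  have h1 : n * N < N := by rw [← hcast]; exact_mod_cast hvl
  have hNz : (0:ℤ) < N := by exact_mod_cast Nat.pos_of_ne_zero (NeZero.ne N)
  have hn1 : 1 ≤ n := by
    by_contra hle
    push_neg at hle
    have : n ≤ 0 := by omega
    nlinarith
  nlinarith

lemma psiC_orth (N : ℕ) [NeZero N] (c : ZMod N) :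
    ∑ x : ZMod N, psiC N (c * x) = if c = 0 then (N : ℂ) else 0 := by
  rcases eq_or_ne c 0 with rfl | hc
  · simp [psiC_zero, ZMod.card]
  · rw [if_neg hc]
    have key : psiC N c * ∑ x : ZMod N, psiC N (c * x) = ∑ x : ZMod N, psiC N (c * x) := by
      rw [Finset.mul_sum]
      have := Fintype.sum_equiv (Equiv.addRight (1 : ZMod N))
        (fun x => psiC N (c * (x + 1))) (fun x => psiC N (c * x)) (fun x => rfl)
      calc ∑ x : ZMod N, psiC N c * psiC N (c * x)
          = ∑ x : ZMod N, psiC N (c * (x + 1)) := by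
            apply Finset.sum_congr rfl
            intro x _
            rw [mul_add, mul_one, psiC_add, mul_comm]
        _ = ∑ x : ZMod N, psiC N (c * x) := this
    have h2 : (psiC N c - 1) * ∑ x : ZMod N, psiC N (c * x) = 0 := by
      rw [sub_mul, one_mul, key, sub_self]
    rcases mul_eq_zero.mp h2 with h | h
    · exact absurd (sub_eq_zero.mp h) (psiC_ne_one N hc)
    · exact h

/-! Counting solutions of `v * u = 0` in `ZMod N`. -/

def Kcard (N : ℕ) [NeZero N] (v : ZMod N) : ℕ :=
  (Finset.univ.filter fun u : ZMod N => v * u = 0).card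

lemma card_multiples_range (k q : ℕ) (hk : 0 < k) :
    ((Finset.range (k * q)).filter (fun r => k ∣ r)).card = q := by
  induction q with
  | zero => simp
  | succ q ih =>
    have : k * (q + 1) = k * q + k := by ring
    rw [this]
    have hsplit : (Finset.range (k * q + k)).filter (fun r => k ∣ r)
        = insert (k * q) ((Finset.range (k * q)).filter (fun r => k ∣ r)) := by
      ext r
      simp only [Finset.mem_filter, Finset.mem_range, Finset.mem_insert]
      constructor
      · rintro ⟨hlt, hdvd⟩
        rcases lt_or_ge r (k * q) with h | h
        · exact Or.inr ⟨h, hdvd⟩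
        · left
          obtain ⟨t, rfl⟩ := hdvd
          have h1 : q ≤ t := Nat.le_of_mul_le_mul_left h hk
          have h2' : k * t < k * (q + 1) := by rw [Nat.mul_succ]; omega
          have h2 : t < q + 1 := Nat.lt_of_mul_lt_mul_left h2'
          have : t = q := by omega
          rw [this, mul_comm]
      · rintro (rfl | ⟨hlt, hdvd⟩)
        · exact ⟨by omega, ⟨q, rfl⟩⟩
        · exact ⟨by omega, hdvd⟩
    rw [hsplit, Finset.card_insert_of_notMem (by simp), ih]

lemma dvd_iff_gcd (m N r : ℕ) (hN : 0 < N) : (N ∣ m * r) ↔ (N / Nat.gcd m N) ∣ r := by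
  set g := Nat.gcd m N with hg
  have hgpos : 0 < g := Nat.gcd_pos_of_pos_right m hN
  obtain ⟨m', hm'⟩ : g ∣ m := Nat.gcd_dvd_left m N
  obtain ⟨N', hN'⟩ : g ∣ N := Nat.gcd_dvd_right m N
  have hNg : N / g = N' := by rw [hN']; exact Nat.mul_div_cancel_left N' hgpos
  have hco : Nat.Coprime m' N' := by
    have := Nat.coprime_div_gcd_div_gcd (m := m) (n := N) hgpos
    rwa [show m / g = m' by rw [hm']; exact Nat.mul_div_cancel_left m' hgpos, hNg] at this
  rw [hNg]
  constructor
  · intro h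
    have h2 : g * N' ∣ g * (m' * r) := by
      rw [← hN', ← mul_assoc, ← hm']; exact h
    have h3 : N' ∣ m' * r := (mul_dvd_mul_iff_left hgpos.ne').mp h2
    exact (Nat.Coprime.dvd_of_dvd_mul_left hco.symm h3)
  · rintro ⟨t, rfl⟩
    exact ⟨m' * t, by rw [hm', hN']; ring⟩

lemma card_range_dvd_mul (m N : ℕ) (hN : 0 < N) :
    ((Finset.range N).filter (fun r => N ∣ m * r)).card = Nat.gcd m N := by
  set g := Nat.gcd m N with hg
  have hgpos : 0 < g := Nat.gcd_pos_of_pos_right m hN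
  have hdvd : g ∣ N := Nat.gcd_dvd_right m N
  have hNg : (N / g) * g = N := Nat.div_mul_cancel hdvd
  have hcongr : (Finset.range N).filter (fun r => N ∣ m * r)
      = (Finset.range ((N / g) * g)).filter (fun r => (N / g) ∣ r) := by
    rw [hNg]
    apply Finset.filter_congr
    intro r _
    exact dvd_iff_gcd m N r hN
  rw [hcongr, card_multiples_range _ _ (Nat.div_pos (Nat.le_of_dvd hN hdvd) hgpos)]

lemma Kcard_natCast (N : ℕ) [NeZero N] (m : ℕ) : Kcard N (m : ZMod N) = Nat.gcd m N := by
  have hN : 0 < N := Nat.pos_of_ne_zero (NeZero.ne N)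
  rw [← card_range_dvd_mul m N hN, Kcard]
  apply Finset.card_bij (fun u _ => u.val)
  · intro u hu
    simp only [Finset.mem_filter, Finset.mem_univ, true_and] at hu ⊢
    refine ⟨Finset.mem_range.mpr (ZMod.val_lt u), ?_⟩
    have : ((m * u.val : ℕ) : ZMod N) = 0 := by
      push_cast
      rw [ZMod.natCast_val, ZMod.cast_id]
      exact hu
    exact (ZMod.natCast_eq_zero_iff _ N).mp this
  · intro u _ v _ h
    exact ZMod.val_injective N h
  · intro r hr
    simp only [Finset.mem_filter, Finset.mem_range] at hr
    refine ⟨(r : ZMod N), ?_, ?_⟩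
    · simp only [Finset.mem_filter, Finset.mem_univ, true_and]
      have : ((m * r : ℕ) : ZMod N) = 0 := (ZMod.natCast_eq_zero_iff _ N).mpr hr.2
      push_cast at this
      exact this
    · exact ZMod.val_cast_of_lt hr.1

lemma Kcard_unit_mul (N : ℕ) [NeZero N] {c : ZMod N} (hc : IsUnit c) (v : ZMod N) :
    Kcard N (c * v) = Kcard N v := by
  unfold Kcard
  congr 1
  apply Finset.filter_congr
  intro u _
  rw [mul_assoc]
  exact hc.mul_right_eq_zero

/-! The quadratic (Gauss-type) sum bound. -/

lemma quad_bound (N : ℕ) [NeZero N] (a b : ZMod N) :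
    ‖∑ y : ZMod N, psiC N (a * y ^ 2 + b * y)‖ ^ 2 ≤ (N : ℝ) * Kcard N (2 * a) := by
  set G := ∑ y : ZMod N, psiC N (a * y ^ 2 + b * y) with hG
  have hsq : ‖G‖ ^ 2 = ‖G * (starRingEnd ℂ) G‖ := by
    rw [norm_mul, RCLike.norm_conj, sq]
  have hexp : G * (starRingEnd ℂ) G
      = ∑ u : ZMod N, psiC N (a * u ^ 2 + b * u) * (if 2 * a * u = 0 then (N : ℂ) else 0) := by
    rw [hG, map_sum, Finset.sum_mul_sum]
    have step1 : ∀ y z : ZMod N,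
        psiC N (a * y ^ 2 + b * y) * (starRingEnd ℂ) (psiC N (a * z ^ 2 + b * z))
        = psiC N ((a * y ^ 2 + b * y) - (a * z ^ 2 + b * z)) := by
      intro y z
      rw [conj_psiC, ← psiC_add]
      ring_nf
    calc ∑ y : ZMod N, ∑ z : ZMod N,
            psiC N (a * y ^ 2 + b * y) * (starRingEnd ℂ) (psiC N (a * z ^ 2 + b * z))
        = ∑ z : ZMod N, ∑ y : ZMod N, psiC N ((a * y ^ 2 + b * y) - (a * z ^ 2 + b * z)) := by
          rw [Finset.sum_comm]
          exact Finset.sum_congr rfl (fun z _ => Finset.sum_congr rfl (fun y _ => step1 y z))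
      _ = ∑ z : ZMod N, ∑ u : ZMod N, psiC N (a * u ^ 2 + b * u) * psiC N ((2 * a * u) * z) := by
          apply Finset.sum_congr rfl
          intro z _
          rw [← Fintype.sum_equiv (Equiv.addLeft z)
            (fun u => psiC N (a * u ^ 2 + b * u) * psiC N ((2 * a * u) * z))
            (fun y => psiC N ((a * y ^ 2 + b * y) - (a * z ^ 2 + b * z)))]
          intro u
          rw [← psiC_add]
          congr 1
          simp only [Equiv.coe_addLeft]
          ring
      _ = ∑ u : ZMod N, psiC N (a * u ^ 2 + b * u) * (if 2 * a * u = 0 then (N : ℂ) else 0) := by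
          rw [Finset.sum_comm]
          apply Finset.sum_congr rfl
          intro u _
          rw [← Finset.mul_sum, psiC_orth N (2 * a * u)]
  rw [hsq, hexp]
  calc ‖∑ u : ZMod N, psiC N (a * u ^ 2 + b * u) * (if 2 * a * u = 0 then (N : ℂ) else 0)‖
      ≤ ∑ u : ZMod N, ‖psiC N (a * u ^ 2 + b * u) * (if 2 * a * u = 0 then (N : ℂ) else 0)‖ :=
        norm_sum_le _ _
    _ = ∑ u : ZMod N, (if 2 * a * u = 0 then (N : ℝ) else 0) := by
        apply Finset.sum_congr rfl
        intro u _
        rw [norm_mul, norm_psiC, one_mul]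
        split_ifs <;> simp
    _ = (N : ℝ) * Kcard N (2 * a) := by
        rw [Finset.sum_ite, Finset.sum_const, Finset.sum_const_zero, add_zero, nsmul_eq_mul,
          mul_comm]
        rfl

/-! Transfer of sums between `ZMod N` and `Finset.range N`. -/

lemma sum_val_transfer {M : Type*} [AddCommMonoid M] (N : ℕ) [NeZero N] (f : ℕ → M) :
    ∑ h : ZMod N, f h.val = ∑ r ∈ Finset.range N, f r := by
  apply Finset.sum_bij (fun (u : ZMod N) _ => u.val)
  · intro u _
    exact Finset.mem_range.mpr (ZMod.val_lt u)
  · intro u _ v _ h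
    exact ZMod.val_injective N h
  · intro r hr
    exact ⟨(r : ZMod N), Finset.mem_univ _, ZMod.val_cast_of_lt (Finset.mem_range.mp hr)⟩
  · intro u _
    rfl

/-! The cubic sum bound via Weyl differencing. -/

lemma cubic_bound (N : ℕ) [NeZero N] {c : ZMod N} (hc : IsUnit c) :
    ‖∑ x : ZMod N, psiC N (c * x ^ 3)‖ ^ 2
      ≤ Real.sqrt 6 * Real.sqrt N * ∑ r ∈ Finset.range N, Real.sqrt (Nat.gcd r N) := by
  have hN : 0 < N := Nat.pos_of_ne_zero (NeZero.ne N)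
  set T := ∑ x : ZMod N, psiC N (c * x ^ 3) with hT
  have hsq : ‖T‖ ^ 2 = ‖T * (starRingEnd ℂ) T‖ := by
    rw [norm_mul, RCLike.norm_conj, sq]
  have hexp : T * (starRingEnd ℂ) T
      = ∑ h : ZMod N, psiC N (c * h ^ 3)
          * ∑ y : ZMod N, psiC N ((3 * c * h) * y ^ 2 + (3 * c * h ^ 2) * y) := by
    rw [hT, map_sum, Finset.sum_mul_sum]
    calc ∑ x : ZMod N, ∑ y : ZMod N, psiC N (c * x ^ 3) * (starRingEnd ℂ) (psiC N (c * y ^ 3))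
        = ∑ y : ZMod N, ∑ x : ZMod N, psiC N (c * x ^ 3 - c * y ^ 3) := by
          rw [Finset.sum_comm]
          exact Finset.sum_congr rfl fun y _ => Finset.sum_congr rfl fun x _ => by
            rw [conj_psiC, ← psiC_add]; ring_nf
      _ = ∑ y : ZMod N, ∑ h : ZMod N,
            psiC N (c * h ^ 3) * psiC N ((3 * c * h) * y ^ 2 + (3 * c * h ^ 2) * y) := by
          apply Finset.sum_congr rfl
          intro y _
          rw [← Fintype.sum_equiv (Equiv.addLeft y)
            (fun h => psiC N (c * h ^ 3) * psiC N ((3 * c * h) * y ^ 2 + (3 * c * h ^ 2) * y))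
            (fun x => psiC N (c * x ^ 3 - c * y ^ 3))]
          intro h
          rw [← psiC_add]
          congr 1
          simp only [Equiv.coe_addLeft]
          ring
      _ = ∑ h : ZMod N, psiC N (c * h ^ 3)
            * ∑ y : ZMod N, psiC N ((3 * c * h) * y ^ 2 + (3 * c * h ^ 2) * y) := by
          rw [Finset.sum_comm]
          exact Finset.sum_congr rfl fun h _ => by rw [Finset.mul_sum]
  have hGh : ∀ h : ZMod N,
      ‖∑ y : ZMod N, psiC N ((3 * c * h) * y ^ 2 + (3 * c * h ^ 2) * y)‖
        ≤ Real.sqrt 6 * Real.sqrt N * Real.sqrt (Nat.gcd h.val N) := by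
    intro h
    have hK : (Kcard N (2 * (3 * c * h)) : ℝ) ≤ 6 * Nat.gcd h.val N := by
      have e1 : 2 * (3 * c * h) = c * ((6 * h.val : ℕ) : ZMod N) := by
        push_cast [natCast_val_self]
        ring
      rw [e1, Kcard_unit_mul N hc, Kcard_natCast]
      have hdvd : Nat.gcd (6 * h.val) N ∣ 6 * Nat.gcd h.val N := by
        rw [← Nat.gcd_mul_left]
        exact Nat.dvd_gcd (Nat.gcd_dvd_left _ _)
          ((Nat.gcd_dvd_right _ _).trans (dvd_mul_left N 6))
      have := Nat.le_of_dvd (by have := Nat.gcd_pos_of_pos_right h.val hN; omega) hdvd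
      exact_mod_cast this
    have hq := quad_bound N (3 * c * h) (3 * c * h ^ 2)
    have h1 : ‖∑ y : ZMod N, psiC N ((3 * c * h) * y ^ 2 + (3 * c * h ^ 2) * y)‖ ^ 2
        ≤ (N : ℝ) * (6 * Nat.gcd h.val N) := by
      refine hq.trans ?_
      exact mul_le_mul_of_nonneg_left hK (by positivity)
    have h2 : ‖∑ y : ZMod N, psiC N ((3 * c * h) * y ^ 2 + (3 * c * h ^ 2) * y)‖
        ≤ Real.sqrt ((N : ℝ) * (6 * Nat.gcd h.val N)) :=
      (Real.le_sqrt (norm_nonneg _) (by positivity)).mpr h1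
    refine h2.trans_eq ?_
    rw [Real.sqrt_mul (by positivity), Real.sqrt_mul (by positivity)]
    ring
  calc ‖T‖ ^ 2 = ‖T * (starRingEnd ℂ) T‖ := hsq
    _ ≤ ∑ h : ZMod N, ‖psiC N (c * h ^ 3)
          * ∑ y : ZMod N, psiC N ((3 * c * h) * y ^ 2 + (3 * c * h ^ 2) * y)‖ := by
        rw [hexp]; exact norm_sum_le _ _
    _ ≤ ∑ h : ZMod N, Real.sqrt 6 * Real.sqrt N * Real.sqrt (Nat.gcd h.val N) := by
        apply Finset.sum_le_sum
        intro h _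
        rw [norm_mul, norm_psiC, one_mul]
        exact hGh h
    _ = Real.sqrt 6 * Real.sqrt N * ∑ r ∈ Finset.range N, Real.sqrt (Nat.gcd r N) := by
        rw [← sum_val_transfer N (fun r => Real.sqrt (Nat.gcd r N)), ← Finset.mul_sum]

/-! Elementary divisor-sum estimates. -/

lemma sum_inv_sqrt_le (M : ℕ) :
    ∑ d ∈ Finset.Icc 1 M, (1 : ℝ) / Real.sqrt d ≤ 2 * Real.sqrt M := by
  have key : ∀ j : ℕ, (1 : ℝ) / Real.sqrt (j + 1) ≤ 2 * Real.sqrt (j + 1) - 2 * Real.sqrt j := by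
    intro j
    have hs : Real.sqrt j ^ 2 = (j : ℝ) := Real.sq_sqrt (by positivity)
    have ht : Real.sqrt ((j : ℝ) + 1) ^ 2 = (j : ℝ) + 1 := Real.sq_sqrt (by positivity)
    have htpos : 0 < Real.sqrt ((j : ℝ) + 1) := Real.sqrt_pos.mpr (by positivity)
    have hsnn : 0 ≤ Real.sqrt j := Real.sqrt_nonneg _
    rw [div_le_iff₀ htpos]
    nlinarith [sq_nonneg (Real.sqrt ((j:ℝ) + 1) - Real.sqrt j)]
  have h1 : ∑ d ∈ Finset.Icc 1 M, (1 : ℝ) / Real.sqrt d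
      = ∑ j ∈ Finset.range M, (1 : ℝ) / Real.sqrt (j + 1) := by
    rw [show Finset.Icc 1 M = Finset.Ico 1 (M+1) by rw [Finset.Ico_add_one_right_eq_Icc],
      Finset.sum_Ico_eq_sum_range]
    simp [add_comm]
  rw [h1]
  calc ∑ j ∈ Finset.range M, (1 : ℝ) / Real.sqrt (j + 1)
      ≤ ∑ j ∈ Finset.range M, (2 * Real.sqrt (j + 1) - 2 * Real.sqrt j) := by
        apply Finset.sum_le_sum
        intro j _
        exact_mod_cast key j
    _ = 2 * Real.sqrt M - 2 * Real.sqrt 0 := by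
        have := Finset.sum_range_sub (fun j : ℕ => 2 * Real.sqrt j) M
        simpa using this
    _ ≤ 2 * Real.sqrt M := by simp [Real.sqrt_zero]

lemma gcd_sum_bound (N : ℕ) (hN : 0 < N) :
    ∑ r ∈ Finset.range N, Real.sqrt (Nat.gcd r N) ≤ 3 * (N : ℝ) ^ ((5:ℝ)/4) := by
  have step1 : ∑ r ∈ Finset.range N, Real.sqrt (Nat.gcd r N)
      ≤ ∑ d ∈ N.divisors, Real.sqrt d * ((N / d : ℕ) : ℝ) := by
    have per_r : ∀ r ∈ Finset.range N, Real.sqrt (Nat.gcd r N)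
        ≤ ∑ d ∈ N.divisors, if d ∣ r then Real.sqrt d else 0 := by
      intro r _
      have hmem : Nat.gcd r N ∈ N.divisors := Nat.mem_divisors.mpr ⟨Nat.gcd_dvd_right r N, hN.ne'⟩
      have := Finset.single_le_sum (f := fun d => if d ∣ r then Real.sqrt d else 0)
        (fun i _ => by positivity) hmem
      simpa [Nat.gcd_dvd_left r N] using this
    calc ∑ r ∈ Finset.range N, Real.sqrt (Nat.gcd r N)
        ≤ ∑ r ∈ Finset.range N, ∑ d ∈ N.divisors, (if d ∣ r then Real.sqrt d else 0) :=
          Finset.sum_le_sum per_r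
      _ = ∑ d ∈ N.divisors, ∑ r ∈ Finset.range N, (if d ∣ r then Real.sqrt d else 0) :=
          Finset.sum_comm
      _ ≤ ∑ d ∈ N.divisors, Real.sqrt d * ((N / d : ℕ) : ℝ) := by
          apply Finset.sum_le_sum
          intro d hd
          obtain ⟨hdvd, -⟩ := Nat.mem_divisors.mp hd
          have hdpos : 0 < d := Nat.pos_of_dvd_of_pos hdvd hN
          rw [Finset.sum_ite, Finset.sum_const, Finset.sum_const_zero, add_zero, nsmul_eq_mul,
            mul_comm]
          apply mul_le_mul_of_nonneg_left _ (Real.sqrt_nonneg _)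
          have hcard : ((Finset.range N).filter (fun r => d ∣ r)).card ≤ N / d := by
            have : ((Finset.range N).filter (fun r => d ∣ r)).card
                ≤ (Finset.range (N / d)).card := by
              apply Finset.card_le_card_of_injOn (fun r => r / d)
              · intro r hr
                simp only [Finset.mem_coe, Finset.mem_filter, Finset.mem_range] at hr ⊢
                by_contra hge
                push_neg at hge
                have : N ≤ r := by
                  calc N = d * (N / d) := (Nat.mul_div_cancel' hdvd).symm
                    _ ≤ d * (r / d) := Nat.mul_le_mul_left d hge
                    _ = r := Nat.mul_div_cancel' hr.2
                omega
              · intro r hr s hs h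
                simp only [Finset.coe_filter, Set.mem_setOf_eq, Finset.mem_range] at hr hs
                have hr2 := Nat.div_mul_cancel hr.2
                have hs2 := Nat.div_mul_cancel hs.2
                calc r = r / d * d := hr2.symm
                  _ = s / d * d := by rw [show r / d = s / d from h]
                  _ = s := hs2
            simpa using this
          exact_mod_cast hcard
  set s := Nat.sqrt N with hs
  have hxpos : (0:ℝ) < N := by exact_mod_cast hN
  have hx1 : (1:ℝ) ≤ N := by exact_mod_cast hN
  have hsqrtN : (s : ℝ) ≤ (N:ℝ) ^ ((1:ℝ)/2) := by
    rw [← Real.sqrt_eq_rpow]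
    rw [Real.le_sqrt (by positivity) (by positivity)]
    exact_mod_cast Nat.sqrt_le' N
  have hquarter : Real.sqrt s ≤ (N:ℝ) ^ ((1:ℝ)/4) := by
    calc Real.sqrt s ≤ Real.sqrt ((N:ℝ) ^ ((1:ℝ)/2)) := Real.sqrt_le_sqrt hsqrtN
      _ = (N:ℝ) ^ ((1:ℝ)/4) := by
          rw [Real.sqrt_eq_rpow, ← Real.rpow_mul (by positivity : (0:ℝ) ≤ N)]
          norm_num
  have step2 : ∑ d ∈ N.divisors, Real.sqrt d * ((N / d : ℕ) : ℝ) ≤ 3 * (N : ℝ) ^ ((5:ℝ)/4) := by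
    rw [← Finset.sum_filter_add_sum_filter_not N.divisors (fun d => d ≤ s)]
    have hA : ∑ d ∈ N.divisors.filter (fun d => d ≤ s), Real.sqrt d * ((N / d : ℕ) : ℝ)
        ≤ 2 * (N : ℝ) ^ ((5:ℝ)/4) := by
      have hterm : ∀ d ∈ N.divisors.filter (fun d => d ≤ s),
          Real.sqrt d * ((N / d : ℕ) : ℝ) ≤ (N : ℝ) * (1 / Real.sqrt d) := by
        intro d hd
        simp only [Finset.mem_filter, Nat.mem_divisors] at hd
        obtain ⟨⟨hdvd, -⟩, -⟩ := hd
        have hdpos : 0 < d := Nat.pos_of_dvd_of_pos hdvd hN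
        have hdr : (0:ℝ) < d := by exact_mod_cast hdpos
        have hcast : ((N / d : ℕ) : ℝ) ≤ (N:ℝ) / d := Nat.cast_div_le
        calc Real.sqrt d * ((N / d : ℕ) : ℝ) ≤ Real.sqrt d * ((N:ℝ) / d) := by
              exact mul_le_mul_of_nonneg_left hcast (Real.sqrt_nonneg _)
          _ = (N : ℝ) * (1 / Real.sqrt d) := by
              have hss : Real.sqrt d * Real.sqrt d = (d:ℝ) := Real.mul_self_sqrt (by positivity)
              have hsne : Real.sqrt d ≠ 0 := by positivity
              field_simp
              linear_combination hss
      calc ∑ d ∈ N.divisors.filter (fun d => d ≤ s), Real.sqrt d * ((N / d : ℕ) : ℝ)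
          ≤ ∑ d ∈ N.divisors.filter (fun d => d ≤ s), (N : ℝ) * (1 / Real.sqrt d) :=
            Finset.sum_le_sum hterm
        _ = (N:ℝ) * ∑ d ∈ N.divisors.filter (fun d => d ≤ s), (1 / Real.sqrt d) := by
            rw [Finset.mul_sum]
        _ ≤ (N:ℝ) * ∑ d ∈ Finset.Icc 1 s, (1 / Real.sqrt d) := by
            apply mul_le_mul_of_nonneg_left _ (by positivity)
            apply Finset.sum_le_sum_of_subset_of_nonneg
            · intro d hd
              simp only [Finset.mem_filter, Nat.mem_divisors] at hd
              exact Finset.mem_Icc.mpr ⟨Nat.pos_of_dvd_of_pos hd.1.1 hN, hd.2⟩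
            · intro d _ _
              positivity
        _ ≤ (N:ℝ) * (2 * Real.sqrt s) := by
            exact mul_le_mul_of_nonneg_left (sum_inv_sqrt_le s) (by positivity)
        _ ≤ (N:ℝ) * (2 * (N:ℝ) ^ ((1:ℝ)/4)) := by
            apply mul_le_mul_of_nonneg_left _ (by positivity)
            linarith [hquarter]
        _ = 2 * (N : ℝ) ^ ((5:ℝ)/4) := by
            rw [show (N:ℝ) * (2 * (N:ℝ) ^ ((1:ℝ)/4)) = 2 * ((N:ℝ) ^ (1:ℝ) * (N:ℝ) ^ ((1:ℝ)/4))
              by rw [Real.rpow_one]; ring]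
            rw [← Real.rpow_add hxpos]
            norm_num
    have hB : ∑ d ∈ N.divisors.filter (fun d => ¬ d ≤ s), Real.sqrt d * ((N / d : ℕ) : ℝ)
        ≤ (N : ℝ) ^ ((5:ℝ)/4) := by
      have hterm : ∀ d ∈ N.divisors.filter (fun d => ¬ d ≤ s),
          Real.sqrt d * ((N / d : ℕ) : ℝ) ≤ (N : ℝ) ^ ((3:ℝ)/4) := by
        intro d hd
        simp only [Finset.mem_filter, Nat.mem_divisors, not_le] at hd
        obtain ⟨⟨hdvd, -⟩, hgt⟩ := hd
        have hdpos : 0 < d := Nat.pos_of_dvd_of_pos hdvd hN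
        have hdr : (0:ℝ) < d := by exact_mod_cast hdpos
        have hcast : ((N / d : ℕ) : ℝ) = (N:ℝ) / d := by
          rw [Nat.cast_div hdvd (by exact_mod_cast hdpos.ne')]
        have hd2 : (N:ℝ) ≤ (d:ℝ) * d := by
          have h1 : N < (s + 1) * (s + 1) := Nat.lt_succ_sqrt N
          have h2 : s + 1 ≤ d := hgt
          have : N ≤ d * d := by nlinarith
          exact_mod_cast this
        have hsd : (N:ℝ) ^ ((1:ℝ)/4) ≤ Real.sqrt d := by
          have h1 : Real.sqrt (N:ℝ) ≤ (d:ℝ) := by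
            rw [show (d:ℝ) = Real.sqrt ((d:ℝ) * d) from (Real.sqrt_mul_self (by positivity)).symm]
            exact Real.sqrt_le_sqrt hd2
          calc (N:ℝ) ^ ((1:ℝ)/4) = Real.sqrt (Real.sqrt (N:ℝ)) := by
                rw [Real.sqrt_eq_rpow, Real.sqrt_eq_rpow,
                  ← Real.rpow_mul (by positivity : (0:ℝ) ≤ N)]
                norm_num
            _ ≤ Real.sqrt d := Real.sqrt_le_sqrt h1
        have hsqpos : (0:ℝ) < (N:ℝ) ^ ((1:ℝ)/4) := by positivity
        calc Real.sqrt d * ((N / d : ℕ) : ℝ) = (N:ℝ) / Real.sqrt d := by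
              rw [hcast]
              have hss : Real.sqrt d * Real.sqrt d = (d:ℝ) := Real.mul_self_sqrt (by positivity)
              have hsne : Real.sqrt d ≠ 0 := by positivity
              field_simp
              linear_combination hss
          _ ≤ (N:ℝ) / (N:ℝ) ^ ((1:ℝ)/4) := by
              apply div_le_div_of_nonneg_left (by positivity) hsqpos hsd
          _ = (N : ℝ) ^ ((3:ℝ)/4) := by
              rw [show ((3:ℝ)/4) = (1:ℝ) - 1/4 by norm_num, Real.rpow_sub hxpos, Real.rpow_one]
      have hcardB : (N.divisors.filter (fun d => ¬ d ≤ s)).card ≤ s := by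
        have : (N.divisors.filter (fun d => ¬ d ≤ s)).card ≤ (Finset.Icc 1 s).card := by
          apply Finset.card_le_card_of_injOn (fun d => N / d)
          · intro d hd
            simp only [Finset.mem_coe, Finset.mem_filter, Nat.mem_divisors, not_le] at hd
            obtain ⟨⟨hdvd, -⟩, hgt⟩ := hd
            have hdpos : 0 < d := Nat.pos_of_dvd_of_pos hdvd hN
            refine Finset.mem_Icc.mpr ⟨Nat.div_pos (Nat.le_of_dvd hN hdvd) hdpos, ?_⟩
            have : N / d < s + 1 := by
              rw [Nat.div_lt_iff_lt_mul hdpos]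
              calc N < (s+1) * (s+1) := Nat.lt_succ_sqrt N
                _ ≤ (s+1) * d := Nat.mul_le_mul_left _ hgt
            show N / d ≤ s
            omega
          · intro d hdm e hem h
            simp only [Finset.coe_filter, Set.mem_setOf_eq, Nat.mem_divisors, not_le] at hdm hem
            have hd0 : d ≠ 0 := (Nat.pos_of_dvd_of_pos hdm.1.1 hN).ne'
            have he0 : e ≠ 0 := (Nat.pos_of_dvd_of_pos hem.1.1 hN).ne'
            calc d = N / (N / d) := (Nat.div_div_self hdm.1.1 hN.ne').symm
              _ = N / (N / e) := by rw [show N / d = N / e from h]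
              _ = e := Nat.div_div_self hem.1.1 hN.ne'
        simpa using this
      calc ∑ d ∈ N.divisors.filter (fun d => ¬ d ≤ s), Real.sqrt d * ((N / d : ℕ) : ℝ)
          ≤ ∑ d ∈ N.divisors.filter (fun d => ¬ d ≤ s), (N : ℝ) ^ ((3:ℝ)/4) :=
            Finset.sum_le_sum hterm
        _ = (N.divisors.filter (fun d => ¬ d ≤ s)).card * (N : ℝ) ^ ((3:ℝ)/4) := by
            rw [Finset.sum_const, nsmul_eq_mul]
        _ ≤ (s:ℝ) * (N : ℝ) ^ ((3:ℝ)/4) := by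
            apply mul_le_mul_of_nonneg_right _ (by positivity)
            exact_mod_cast hcardB
        _ ≤ (N:ℝ) ^ ((1:ℝ)/2) * (N : ℝ) ^ ((3:ℝ)/4) := by
            exact mul_le_mul_of_nonneg_right hsqrtN (by positivity)
        _ = (N : ℝ) ^ ((5:ℝ)/4) := by
            rw [← Real.rpow_add hxpos]
            norm_num
    linarith
  linarith [step1, step2]

/-- Gauss sum bound: `|S(B/Q)| ≤ C·Q^(-δ)` for the normalized cubic Gauss sum,
with `gcd(B,Q) = 1`. -/
theorem stmt_1 :
    ∃ C > (0 : ℝ), ∃ δ > (0 : ℝ), ∀ Q : ℕ, 1 ≤ Q → ∀ B : ℤ, Int.gcd B (Q : ℤ) = 1 →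
      ‖(1 / (Q : ℂ)) * ∑ r ∈ Finset.range Q,
          Complex.exp (-(2 * (Real.pi : ℂ) * Complex.I) * (B : ℂ) * (r : ℂ) ^ 3 / (Q : ℂ))‖
        ≤ C * (Q : ℝ) ^ (-δ) := by
  refine ⟨3, by norm_num, 1/8, by norm_num, ?_⟩
  intro Q hQ B hB
  haveI : NeZero Q := ⟨by omega⟩
  have hQpos : (0:ℝ) < Q := by exact_mod_cast hQ
  set c : ZMod Q := ((-B : ℤ) : ZMod Q) with hc_def
  have hc : IsUnit c := by
    have hcop : IsCoprime (-B : ℤ) (Q : ℤ) :=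
      (Int.isCoprime_iff_gcd_eq_one.mpr hB).neg_left
    obtain ⟨a, b, hab⟩ := hcop
    apply IsUnit.of_mul_eq_one (a := c) ((a : ℤ) : ZMod Q)
    have := congrArg (fun z : ℤ => ((z : ℤ) : ZMod Q)) hab
    push_cast at this
    rw [ZMod.natCast_self] at this
    simp only [mul_zero, add_zero] at this
    rw [← this, hc_def]
    push_cast
    ring
  have hsum : ∑ r ∈ Finset.range Q,
      Complex.exp (-(2 * (Real.pi : ℂ) * Complex.I) * (B : ℂ) * (r : ℂ) ^ 3 / (Q : ℂ))
      = ∑ x : ZMod Q, psiC Q (c * x ^ 3) := by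
    have h1 : ∀ x : ZMod Q, psiC Q (c * x ^ 3) = eN Q (-B * (x.val : ℤ) ^ 3) := by
      intro x
      rw [← psiC_intCast]
      congr 1
      push_cast [natCast_val_self]
      rw [hc_def]
      push_cast
      ring
    calc ∑ r ∈ Finset.range Q,
          Complex.exp (-(2 * (Real.pi : ℂ) * Complex.I) * (B : ℂ) * (r : ℂ) ^ 3 / (Q : ℂ))
        = ∑ r ∈ Finset.range Q, eN Q (-B * (r : ℤ) ^ 3) := by
          apply Finset.sum_congr rfl
          intro r _
          rw [eN]
          congr 1
          push_cast
          ring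
      _ = ∑ x : ZMod Q, psiC Q (c * x ^ 3) := by
          rw [← sum_val_transfer Q (fun r => eN Q (-B * (r : ℤ) ^ 3))]
          exact Finset.sum_congr rfl fun x _ => (h1 x).symm
  rw [hsum]
  set T := ∑ x : ZMod Q, psiC Q (c * x ^ 3) with hT
  have h6 : Real.sqrt 6 ≤ 3 := by
    nlinarith [Real.sq_sqrt (show (0:ℝ) ≤ 6 by norm_num), Real.sqrt_nonneg 6]
  have hsqQ : Real.sqrt Q = (Q:ℝ) ^ ((1:ℝ)/2) := Real.sqrt_eq_rpow _
  have hTsq : ‖T‖ ^ 2 ≤ 9 * (Q:ℝ) ^ ((7:ℝ)/4) := by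
    calc ‖T‖ ^ 2 ≤ Real.sqrt 6 * Real.sqrt Q * ∑ r ∈ Finset.range Q, Real.sqrt (Nat.gcd r Q) :=
          cubic_bound Q hc
      _ ≤ 3 * (Q:ℝ) ^ ((1:ℝ)/2) * (3 * (Q : ℝ) ^ ((5:ℝ)/4)) := by
          apply mul_le_mul
          · rw [hsqQ] at *
            apply mul_le_mul h6 le_rfl (by positivity) (by norm_num)
          · exact gcd_sum_bound Q (by omega)
          · apply Finset.sum_nonneg; intro r _; positivity
          · positivity
      _ = 9 * ((Q:ℝ) ^ ((1:ℝ)/2) * (Q : ℝ) ^ ((5:ℝ)/4)) := by ring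
      _ = 9 * (Q:ℝ) ^ ((7:ℝ)/4) := by
          rw [← Real.rpow_add hQpos]
          norm_num
  have hTle : ‖T‖ ≤ 3 * (Q:ℝ) ^ ((7:ℝ)/8) := by
    have hrhs : (3 * (Q:ℝ) ^ ((7:ℝ)/8)) ^ 2 = 9 * (Q:ℝ) ^ ((7:ℝ)/4) := by
      rw [mul_pow, ← Real.rpow_natCast ((Q:ℝ) ^ ((7:ℝ)/8)) 2, ← Real.rpow_mul hQpos.le]
      norm_num
    have h2 : ‖T‖ ^ 2 ≤ (3 * (Q:ℝ) ^ ((7:ℝ)/8)) ^ 2 := by rw [hrhs]; exact hTsq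
    exact (pow_le_pow_iff_left₀ (norm_nonneg _) (by positivity) two_ne_zero).mp h2
  have hnorm : ‖(1 / (Q : ℂ)) * T‖ = ‖T‖ / Q := by
    rw [norm_mul, norm_div, norm_one, Complex.norm_natCast, one_div, div_eq_inv_mul]
  rw [hnorm]
  rw [div_le_iff₀ hQpos]
  calc ‖T‖ ≤ 3 * (Q:ℝ) ^ ((7:ℝ)/8) := hTle
    _ = 3 * (Q:ℝ) ^ (-(1/8 : ℝ)) * Q := by
        rw [show ((7:ℝ)/8) = -(1/8 : ℝ) + 1 by norm_num, Real.rpow_add hQpos, Real.rpow_one]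
        ring
end

section
/- Let K : ℤ → ℂ be supported in [-N, N] and let T_K f(x) = Σ_n K(n) f(x-n). Then for any finitely supported f, g : ℤ → ℂ, |⟨T_K f, g⟩| ≤ C · N^(1/r + 1/s - 1) · ‖T_K‖_{ℓ^r → ℓ^{s'}} · Λ(f,g), where Λ(f,g) = Σ_{I} |3I| ⟨f⟩_{3I,r} ⟨g⟩_{3I,s} is a sparse form over a sparse collection of intervals (here 1 ≤ r, s < ∞, s' is the conjugate exponent of s, and C is an absolute constant). -/
/-- The interval of integers encoded by a pair `(a, n)`, namely `ℤ ∩ [a, a+n]`,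
which has cardinality `n+1`. -/
noncomputable def intIcc (p : ℤ × ℕ) : Finset ℤ := Finset.Icc p.1 (p.1 + p.2)

/-- The `r`-average `⟨f⟩_{I,r}` of `f` over the interval encoded by `p`. -/
noncomputable def intAvg (p : ℤ × ℕ) (r : ℝ) (f : ℤ →₀ ℂ) : ℝ :=
  (((p.2 : ℝ) + 1)⁻¹ * ∑ x ∈ intIcc p, ‖f x‖ ^ r) ^ (1 / r)

/-- A collection `𝒮` of intervals is sparse, as witnessed by sets `E`. -/
def IsSparse (𝒮 : Finset (ℤ × ℕ)) (E : ℤ × ℕ → Finset ℤ) : Prop :=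
  (∀ p ∈ 𝒮, E p ⊆ intIcc p) ∧
  (∀ p ∈ 𝒮, ((p.2 : ℝ) + 1) < 4 * (E p).card) ∧
  ((𝒮 : Set (ℤ × ℕ)).Pairwise fun p q => Disjoint (E p) (E q))

/-- The sparse form `Λ_{𝒮,r,s}(f,g) = Σ_{S∈𝒮} |S| ⟨f⟩_{S,r} ⟨g⟩_{S,s}`. -/
noncomputable def sparseForm (𝒮 : Finset (ℤ × ℕ)) (r s : ℝ) (f g : ℤ →₀ ℂ) : ℝ :=
  ∑ p ∈ 𝒮, ((p.2 : ℝ) + 1) * intAvg p r f * intAvg p s g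

lemma intAvg_nonneg (p : ℤ × ℕ) (r : ℝ) (f : ℤ →₀ ℂ) : 0 ≤ intAvg p r f := by
  apply Real.rpow_nonneg
  apply mul_nonneg (by positivity)
  exact Finset.sum_nonneg fun x _ => Real.rpow_nonneg (norm_nonneg _) r

/-- Sparse bound for a convolution operator `T_K` with kernel supported in `[-N,N]`:
`|⟨T_K f, g⟩| ≤ C · N^{1/r+1/s-1} · ‖T_K‖_{ℓ^r → ℓ^{s'}} · Λ_{𝒮,r,s}(f,g)`.
The operator norm `‖T_K‖_{ℓ^r→ℓ^{s'}}` is encoded by duality through any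
constant `A` satisfying `|⟨T_K f, g⟩| ≤ A ‖f‖_r ‖g‖_s`. -/
theorem stmt_2 :
    ∃ C > (0 : ℝ), ∀ (N : ℕ), 1 ≤ N → ∀ K : ℤ → ℂ,
      (∀ n : ℤ, K n ≠ 0 → |n| ≤ (N : ℤ)) →
      ∀ r s : ℝ, 1 ≤ r → 1 ≤ s →
      ∀ A : ℝ, 0 ≤ A →
      (∀ f g : ℤ →₀ ℂ,
        ‖∑ x ∈ g.support, (∑ n ∈ f.support, K (x - n) * f n) * (starRingEnd ℂ) (g x)‖
          ≤ A * (∑ n ∈ f.support, ‖f n‖ ^ r) ^ (1 / r) * (∑ x ∈ g.support, ‖g x‖ ^ s) ^ (1 / s)) →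
      ∀ f g : ℤ →₀ ℂ,
        ∃ (𝒮 : Finset (ℤ × ℕ)) (E : ℤ × ℕ → Finset ℤ), IsSparse 𝒮 E ∧
          ‖∑ x ∈ g.support, (∑ n ∈ f.support, K (x - n) * f n) * (starRingEnd ℂ) (g x)‖
            ≤ C * (N : ℝ) ^ (1 / r + 1 / s - 1) * A * sparseForm 𝒮 r s f g := by
  refine ⟨3, by norm_num, ?_⟩
  intro N hN K hK r s hr hs A hA hdual f g
  have hr0 : (0:ℝ) < r := lt_of_lt_of_le one_pos hr
  have hs0 : (0:ℝ) < s := lt_of_lt_of_le one_pos hs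
  have hNpos : 0 < N := hN
  set Nz : ℤ := (N : ℤ) with hNz
  have hNzpos : 0 < Nz := by rw [hNz]; exact_mod_cast hNpos
  have hNzne : Nz ≠ 0 := ne_of_gt hNzpos
  have hmem : ∀ j x : ℤ, x / Nz = j ↔ (j * Nz ≤ x ∧ x ≤ j * Nz + Nz - 1) := by
    intro j x
    constructor
    · rintro rfl
      have h1 := Int.mul_ediv_add_emod x Nz
      have h2 := Int.emod_nonneg x hNzne
      have h3 := Int.emod_lt_of_pos x hNzpos
      have h4 : Nz * (x / Nz) = (x / Nz) * Nz := mul_comm _ _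
      constructor <;> linarith
    · rintro ⟨h1, h2⟩
      have hx : x = (x - j * Nz) + j * Nz := by ring
      rw [hx, Int.add_mul_ediv_right _ _ hNzne,
        Int.ediv_eq_zero_of_lt (by linarith) (by linarith), zero_add]
  set P : ℤ → ℤ × ℕ := fun j => (j * Nz - Nz, 3 * N - 1) with hP
  have hPIcc : ∀ j, intIcc (P j) = Finset.Icc (j * Nz - Nz) (j * Nz + 2 * Nz - 1) := by
    intro j
    unfold intIcc
    congr 1
    simp only [hP, hNz]
    push_cast [Nat.cast_sub (by omega : 1 ≤ 3 * N)]
    ring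
  set J : Finset ℤ := g.support.image (fun x => x / Nz) with hJ
  set 𝒮 : Finset (ℤ × ℕ) := J.image P with h𝒮
  set E : ℤ × ℕ → Finset ℤ := fun p => Finset.Icc (p.1 + Nz) (p.1 + 2 * Nz - 1) with hE
  have hPinj : ∀ a ∈ J, ∀ b ∈ J, P a = P b → a = b := by
    intro a _ b _ hab
    have h1 : a * Nz - Nz = b * Nz - Nz := congrArg Prod.fst hab
    have h2 : a * Nz = b * Nz := by linarith
    exact mul_right_cancel₀ hNzne h2
  have hsparse : IsSparse 𝒮 E := by
    refine ⟨?_, ?_, ?_⟩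
    · intro p hp
      simp only [h𝒮, Finset.mem_image] at hp
      obtain ⟨j, hj, rfl⟩ := hp
      rw [hPIcc]
      intro x hx
      simp only [hE, hP, Finset.mem_Icc] at hx ⊢
      constructor <;> linarith [hx.1, hx.2]
    · intro p hp
      simp only [h𝒮, Finset.mem_image] at hp
      obtain ⟨j, hj, rfl⟩ := hp
      have hcard : (E (P j)).card = N := by
        simp only [hE, Int.card_Icc]
        have h : (P j).1 + 2 * Nz - 1 + 1 - ((P j).1 + Nz) = Nz := by ring
        rw [h, hNz]
        simp
      rw [hcard]
      simp only [hP]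
      have h1 : (1:ℝ) ≤ (N:ℝ) := by exact_mod_cast hN
      push_cast [Nat.cast_sub (by omega : 1 ≤ 3 * N)]
      linarith
    · intro p hp q hq hpq
      simp only [h𝒮, Finset.coe_image, Set.mem_image, Finset.mem_coe] at hp hq
      obtain ⟨j, hj, rfl⟩ := hp
      obtain ⟨k, hk, rfl⟩ := hq
      have hjk : j ≠ k := fun h => hpq (by rw [h])
      rw [Finset.disjoint_left]
      intro x hx hx'
      simp only [hE, hP, Finset.mem_Icc] at hx hx'
      have h1 : x / Nz = j := (hmem j x).2 ⟨by linarith [hx.1], by linarith [hx.2]⟩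
      have h2 : x / Nz = k := (hmem k x).2 ⟨by linarith [hx'.1], by linarith [hx'.2]⟩
      exact hjk (h1 ▸ h2)
  refine ⟨𝒮, E, hsparse, ?_⟩
  set fS : ℤ → (ℤ →₀ ℂ) := fun j => f.filter (fun n => n ∈ intIcc (P j)) with hfS
  set gS : ℤ → (ℤ →₀ ℂ) := fun j => g.filter (fun x => x / Nz = j) with hgS
  have hgsuppj : ∀ j, (gS j).support = g.support.filter (fun x => x / Nz = j) := by
    intro j
    simp only [hgS]
    exact Finsupp.support_filter _ _
  have hfsuppj : ∀ j, (fS j).support = f.support.filter (fun n => n ∈ intIcc (P j)) := by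
    intro j
    simp only [hfS]
    exact Finsupp.support_filter _ _
  have hgval : ∀ j x, x / Nz = j → (gS j) x = g x := by
    intro j x h
    rw [hgS]
    exact Finsupp.filter_apply_pos _ _ h
  have hfval : ∀ j n, n ∈ intIcc (P j) → (fS j) n = f n := by
    intro j n h
    rw [hfS]
    exact Finsupp.filter_apply_pos _ _ h
  -- decompose the pairing
  have hdecomp : ∑ x ∈ g.support, (∑ n ∈ f.support, K (x - n) * f n) * (starRingEnd ℂ) (g x)
      = ∑ j ∈ J, ∑ x ∈ (gS j).support,
          (∑ n ∈ (fS j).support, K (x - n) * (fS j) n) * (starRingEnd ℂ) ((gS j) x) := by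
    rw [← Finset.sum_fiberwise_of_maps_to (g := fun x => x / Nz) (t := J)
      (fun x hx => Finset.mem_image_of_mem _ hx)]
    refine Finset.sum_congr rfl fun j hj => ?_
    rw [hgsuppj j]
    refine Finset.sum_congr rfl fun x hx => ?_
    simp only [Finset.mem_filter] at hx
    obtain ⟨hxg, hxj⟩ := hx
    rw [hgval j x hxj]
    congr 1
    rw [show (∑ n ∈ (fS j).support, K (x - n) * (fS j) n)
        = ∑ n ∈ (fS j).support, K (x - n) * f n from
      Finset.sum_congr rfl fun n hn => by
        rw [hfval j n (by rw [hfsuppj j] at hn; exact (Finset.mem_filter.mp hn).2)]]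
    have hsub : (fS j).support ⊆ f.support := by
      rw [hfsuppj j]; exact Finset.filter_subset _ _
    refine (Finset.sum_subset hsub fun n hnf hn => ?_).symm
    have hnI : n ∉ intIcc (P j) := by
      rw [hfsuppj j] at hn
      exact fun h => hn (Finset.mem_filter.mpr ⟨hnf, h⟩)
    rw [hPIcc, Finset.mem_Icc, not_and_or] at hnI
    have hxmem := (hmem j x).1 hxj
    have hKz : K (x - n) = 0 := by
      by_contra h
      have hb := abs_le.mp (hK _ h)
      rcases hnI with h1 | h1
      · have h1' := lt_of_not_ge h1
        linarith [hb.2, hxmem.1]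
      · have h1' := lt_of_not_ge h1
        linarith [hb.1, hxmem.2]
    rw [hKz, zero_mul]
  rw [hdecomp]
  have h3N : ∀ j : ℤ, (((P j).2 : ℝ) + 1) = 3 * N := by
    intro j
    simp only [hP]
    push_cast [Nat.cast_sub (by omega : 1 ≤ 3 * N)]
    ring
  have h3Npos : (0:ℝ) < 3 * N := by positivity
  have h3Nne : (3 * (N:ℝ)) ≠ 0 := ne_of_gt h3Npos
  have hkey : ∀ S e : ℝ, 0 ≤ S → S ^ e = (3*N:ℝ) ^ e * ((3*(N:ℝ))⁻¹ * S) ^ e := by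
    intro S e hS
    rw [← Real.mul_rpow h3Npos.le (mul_nonneg (inv_nonneg.mpr h3Npos.le) hS),
      ← mul_assoc, mul_inv_cancel₀ h3Nne, one_mul]
  have hblock : ∀ j ∈ J,
      ‖∑ x ∈ (gS j).support, (∑ n ∈ (fS j).support, K (x - n) * (fS j) n) * (starRingEnd ℂ) ((gS j) x)‖
      ≤ A * ((3*N:ℝ) ^ (1/r) * intAvg (P j) r f) * ((3*N:ℝ) ^ (1/s) * intAvg (P j) s g) := by
    intro j hj
    refine le_trans (hdual (fS j) (gS j)) ?_
    have hfsum : (∑ n ∈ (fS j).support, ‖(fS j) n‖ ^ r) = ∑ x ∈ intIcc (P j), ‖f x‖ ^ r := by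
      rw [show (∑ n ∈ (fS j).support, ‖(fS j) n‖ ^ r) = ∑ n ∈ (fS j).support, ‖f n‖ ^ r from
        Finset.sum_congr rfl fun n hn => by
          rw [hfval j n (by rw [hfsuppj j] at hn; exact (Finset.mem_filter.mp hn).2)]]
      refine Finset.sum_subset ?_ fun x hxI hx => ?_
      · rw [hfsuppj j]; intro n hn; exact (Finset.mem_filter.mp hn).2
      · have hfx : f x = 0 := by
          by_contra h
          exact hx (by rw [hfsuppj j]
                       exact Finset.mem_filter.mpr ⟨Finsupp.mem_support_iff.mpr h, hxI⟩)
        rw [hfx, norm_zero, Real.zero_rpow (ne_of_gt hr0)]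
    have hfpart : (∑ n ∈ (fS j).support, ‖(fS j) n‖ ^ r) ^ (1/r)
        = (3*N:ℝ) ^ (1/r) * intAvg (P j) r f := by
      rw [hfsum]
      unfold intAvg
      rw [h3N j]
      exact hkey _ _ (Finset.sum_nonneg fun x _ => Real.rpow_nonneg (norm_nonneg _) r)
    have hgsub : (gS j).support ⊆ intIcc (P j) := by
      intro x hx
      rw [hgsuppj j] at hx
      have hxj := (Finset.mem_filter.mp hx).2
      have hxmem := (hmem j x).1 hxj
      rw [hPIcc, Finset.mem_Icc]
      constructor <;> linarith [hxmem.1, hxmem.2]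
    have hgsum : (∑ x ∈ (gS j).support, ‖(gS j) x‖ ^ s) ≤ ∑ x ∈ intIcc (P j), ‖g x‖ ^ s := by
      rw [show (∑ x ∈ (gS j).support, ‖(gS j) x‖ ^ s) = ∑ x ∈ (gS j).support, ‖g x‖ ^ s from
        Finset.sum_congr rfl fun x hx => by
          rw [hgval j x (by rw [hgsuppj j] at hx; exact (Finset.mem_filter.mp hx).2)]]
      exact Finset.sum_le_sum_of_subset_of_nonneg hgsub
        (fun x _ _ => Real.rpow_nonneg (norm_nonneg _) s)
    have hgpart : (∑ x ∈ (gS j).support, ‖(gS j) x‖ ^ s) ^ (1/s)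
        ≤ (3*N:ℝ) ^ (1/s) * intAvg (P j) s g := by
      have step1 : (∑ x ∈ (gS j).support, ‖(gS j) x‖ ^ s) ^ (1/s)
          ≤ (∑ x ∈ intIcc (P j), ‖g x‖ ^ s) ^ (1/s) := by
        apply Real.rpow_le_rpow ?_ hgsum (by positivity)
        exact Finset.sum_nonneg fun x _ => Real.rpow_nonneg (norm_nonneg _) s
      refine le_trans step1 (le_of_eq ?_)
      unfold intAvg
      rw [h3N j]
      exact hkey _ _ (Finset.sum_nonneg fun x _ => Real.rpow_nonneg (norm_nonneg _) s)
    rw [hfpart]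
    apply mul_le_mul_of_nonneg_left hgpart
    exact mul_nonneg hA (mul_nonneg (by positivity) (intAvg_nonneg _ _ _))
  have hsum : ∑ j ∈ J, A * ((3*N:ℝ) ^ (1/r) * intAvg (P j) r f) * ((3*N:ℝ) ^ (1/s) * intAvg (P j) s g)
      = A * (3*N:ℝ) ^ (1/r + 1/s - 1) * sparseForm 𝒮 r s f g := by
    have hform : sparseForm 𝒮 r s f g = ∑ j ∈ J, (3*N:ℝ) * intAvg (P j) r f * intAvg (P j) s g := by
      unfold sparseForm
      rw [h𝒮, Finset.sum_image hPinj]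
      exact Finset.sum_congr rfl fun j hj => by rw [h3N j]
    rw [hform, Finset.mul_sum]
    refine Finset.sum_congr rfl fun j hj => ?_
    have hexp : (3*N:ℝ) ^ (1/r + 1/s - 1) * (3*N:ℝ) = (3*N:ℝ) ^ (1/r) * (3*N:ℝ) ^ (1/s) := by
      rw [Real.rpow_sub h3Npos, Real.rpow_add h3Npos, Real.rpow_one]
      field_simp
    linear_combination (A * intAvg (P j) r f * intAvg (P j) s g) * hexp.symm
  have hmain : ‖∑ j ∈ J, ∑ x ∈ (gS j).support,
      (∑ n ∈ (fS j).support, K (x - n) * (fS j) n) * (starRingEnd ℂ) ((gS j) x)‖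
      ≤ A * (3*N:ℝ) ^ (1/r + 1/s - 1) * sparseForm 𝒮 r s f g := by
    refine le_trans (norm_sum_le _ _) ?_
    rw [← hsum]
    exact Finset.sum_le_sum hblock
  refine le_trans hmain ?_
  have hΛ : 0 ≤ sparseForm 𝒮 r s f g := by
    apply Finset.sum_nonneg
    intro p hp
    exact mul_nonneg (mul_nonneg (by positivity) (intAvg_nonneg _ _ _)) (intAvg_nonneg _ _ _)
  have hNRpos : (0:ℝ) < N := by exact_mod_cast hNpos
  have hexp_le : (3*N:ℝ) ^ (1/r + 1/s - 1) ≤ 3 * (N:ℝ) ^ (1/r + 1/s - 1) := by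
    rw [show (3*N:ℝ) = 3 * (N:ℝ) by norm_num, Real.mul_rpow (by norm_num) (le_of_lt hNRpos)]
    have h1 : (3:ℝ) ^ (1/r + 1/s - 1) ≤ 3 ^ (1:ℝ) := by
      apply Real.rpow_le_rpow_of_exponent_le (by norm_num)
      have h1r : 1/r ≤ 1 := by rw [div_le_one hr0]; exact hr
      have h1s : 1/s ≤ 1 := by rw [div_le_one hs0]; exact hs
      linarith
    rw [Real.rpow_one] at h1
    exact mul_le_mul_of_nonneg_right h1 (Real.rpow_nonneg (le_of_lt hNRpos) _)
  calc A * (3*N:ℝ) ^ (1/r + 1/s - 1) * sparseForm 𝒮 r s f g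
      ≤ A * (3 * (N:ℝ) ^ (1/r + 1/s - 1)) * sparseForm 𝒮 r s f g := by
        exact mul_le_mul_of_nonneg_right (mul_le_mul_of_nonneg_left hexp_le hA) hΛ
    _ = 3 * (N:ℝ) ^ (1/r + 1/s - 1) * A * sparseForm 𝒮 r s f g := by ring
end

section
/- Let S be a collection of dyadic intervals satisfying the Carleson condition Σ_{J ∈ S : J ⊆ I} |J| ≤ Λ|I| for all I ∈ S, with Λ ≥ 2. Then S can be partitioned into at most ⌈2Λ⌉ subcollections, each of which is 1/2-sparse. -/
/-- The dyadic interval of integers encoded by `(k, m)`, namely `[2^k m, 2^k (m+1)) ∩ ℤ`. -/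
noncomputable def dyad (p : ℕ × ℤ) : Finset ℤ := Finset.Ico (2 ^ p.1 * p.2) (2 ^ p.1 * (p.2 + 1))

lemma dyad_card (p : ℕ × ℤ) : (dyad p).card = 2 ^ p.1 := by
  rw [dyad, Int.card_Ico]
  have : 2 ^ p.1 * (p.2 + 1) - 2 ^ p.1 * p.2 = ((2 ^ p.1 : ℕ) : ℤ) := by push_cast; ring
  rw [this, Int.toNat_natCast]

lemma dyad_nonempty (p : ℕ × ℤ) : (dyad p).Nonempty := by
  rw [dyad, Finset.nonempty_Ico]
  have : (0:ℤ) < 2 ^ p.1 := by positivity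
  nlinarith

lemma dyad_aux {p q : ℕ × ℤ} (h : p.1 ≤ q.1) :
    dyad p ⊆ dyad q ∨ Disjoint (dyad p) (dyad q) := by
  obtain ⟨d, hd⟩ := Nat.exists_eq_add_of_le h
  have h2 : (0:ℤ) < 2 ^ p.1 := by positivity
  have hpow : (2:ℤ) ^ q.1 = 2 ^ p.1 * 2 ^ d := by rw [hd, pow_add]
  rcases le_or_gt (p.2 + 1) (2 ^ d * q.2) with hc | hc
  · right
    rw [Finset.disjoint_left]
    intro x hx hx'
    simp only [dyad, Finset.mem_Ico] at hx hx'
    have : 2 ^ p.1 * (p.2 + 1) ≤ 2 ^ q.1 * q.2 := by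
      rw [hpow, mul_assoc]; exact mul_le_mul_of_nonneg_left hc h2.le
    omega
  rcases le_or_gt (2 ^ d * (q.2 + 1)) p.2 with hc' | hc'
  · right
    rw [Finset.disjoint_left]
    intro x hx hx'
    simp only [dyad, Finset.mem_Ico] at hx hx'
    have : 2 ^ q.1 * (q.2 + 1) ≤ 2 ^ p.1 * p.2 := by
      rw [hpow, mul_assoc]; exact mul_le_mul_of_nonneg_left hc' h2.le
    omega
  · left
    apply Finset.Ico_subset_Ico
    · rw [hpow, mul_assoc]
      exact mul_le_mul_of_nonneg_left (by omega) h2.le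
    · rw [hpow, mul_assoc]
      exact mul_le_mul_of_nonneg_left (by omega) h2.le

lemma dyad_tri (p q : ℕ × ℤ) :
    dyad p ⊆ dyad q ∨ dyad q ⊆ dyad p ∨ Disjoint (dyad p) (dyad q) := by
  rcases le_total p.1 q.1 with h | h
  · rcases dyad_aux h with h' | h'
    · exact Or.inl h'
    · exact Or.inr (Or.inr h')
  · rcases dyad_aux h with h' | h'
    · exact Or.inr (Or.inl h')
    · exact Or.inr (Or.inr h'.symm)

lemma dyad_inj {p q : ℕ × ℤ} (h : dyad p = dyad q) : p = q := by
  have hc := congrArg Finset.card h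
  rw [dyad_card, dyad_card] at hc
  have h1 : p.1 = q.1 := Nat.pow_right_injective le_rfl hc
  have h2 : (0:ℤ) < 2 ^ p.1 := by positivity
  have hmp : 2 ^ p.1 * p.2 ∈ dyad p := by
    rw [dyad, Finset.mem_Ico]
    exact ⟨le_refl _, by nlinarith⟩
  have hmq : 2 ^ q.1 * q.2 ∈ dyad q := by
    have h3 : (0:ℤ) < 2 ^ q.1 := by positivity
    rw [dyad, Finset.mem_Ico]
    exact ⟨le_refl _, by nlinarith⟩
  rw [h] at hmp; rw [← h] at hmq
  rw [dyad, Finset.mem_Ico] at hmp hmq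
  have e1 : 2 ^ q.1 * q.2 ≤ 2 ^ p.1 * p.2 := hmp.1
  have e2 : 2 ^ p.1 * p.2 ≤ 2 ^ q.1 * q.2 := hmq.1
  have : 2 ^ p.1 * p.2 = 2 ^ q.1 * q.2 := le_antisymm e2 e1
  rw [h1] at this
  have h3 : (0:ℤ) < 2 ^ q.1 := by positivity
  have : p.2 = q.2 := by
    exact mul_left_cancel₀ (by positivity) this
  exact Prod.ext h1 this

lemma exists_max_above (F : Finset (ℕ × ℤ)) :
    ∀ q ∈ F, ∃ m ∈ F, dyad q ⊆ dyad m ∧ ∀ t ∈ F, ¬ dyad m ⊂ dyad t := by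
  classical
  suffices key : ∀ n, ∀ q ∈ F, (F.filter (fun t => dyad q ⊂ dyad t)).card ≤ n →
      ∃ m ∈ F, dyad q ⊆ dyad m ∧ ∀ t ∈ F, ¬ dyad m ⊂ dyad t by
    intro q hq; exact key _ q hq le_rfl
  intro n
  induction n with
  | zero =>
    intro q hq h0
    refine ⟨q, hq, subset_rfl, fun t ht hlt => ?_⟩
    have : t ∈ F.filter (fun t => dyad q ⊂ dyad t) := Finset.mem_filter.mpr ⟨ht, hlt⟩
    have := Finset.card_pos.mpr ⟨t, this⟩
    omega
  | succ n ih =>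
    intro q hq h
    by_cases hex : ∃ t ∈ F, dyad q ⊂ dyad t
    · obtain ⟨t, ht, hqt⟩ := hex
      have hsub : F.filter (fun s => dyad t ⊂ dyad s) ⊆ F.filter (fun s => dyad q ⊂ dyad s) := by
        intro s hs
        rw [Finset.mem_filter] at hs ⊢
        exact ⟨hs.1, hqt.trans hs.2⟩
      have ht1 : t ∈ F.filter (fun s => dyad q ⊂ dyad s) := Finset.mem_filter.mpr ⟨ht, hqt⟩
      have ht2 : t ∉ F.filter (fun s => dyad t ⊂ dyad s) := by
        rw [Finset.mem_filter]; rintro ⟨-, hh⟩; exact (ssubset_irrefl _) hh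
      have hlt : (F.filter (fun s => dyad t ⊂ dyad s)).card <
          (F.filter (fun s => dyad q ⊂ dyad s)).card :=
        Finset.card_lt_card ⟨hsub, fun hsub' => ht2 (hsub' ht1)⟩
      obtain ⟨m, hm, h1, h2⟩ := ih t ht (by omega)
      exact ⟨m, hm, hqt.subset.trans h1, h2⟩
    · push_neg at hex
      exact ⟨q, hq, subset_rfl, hex⟩

/-- A collection of dyadic intervals satisfying a Carleson condition with constant `Λ ≥ 2`
can be partitioned into at most `⌈2Λ⌉` subcollections, each `1/2`-sparse. -/
theorem stmt_10 (Λ : ℝ) (hΛ : 2 ≤ Λ) (S : Finset (ℕ × ℤ))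
    (hCarleson : ∀ p ∈ S,
      ∑ q ∈ S.filter (fun q => dyad q ⊆ dyad p), ((2 : ℝ) ^ q.1) ≤ Λ * (2 : ℝ) ^ p.1) :
    ∃ c : ℕ × ℤ → ℕ, (∀ p ∈ S, c p < ⌈2 * Λ⌉₊) ∧
      ∀ i : ℕ, ∃ E : ℕ × ℤ → Finset ℤ,
        (∀ p ∈ S.filter (fun p => c p = i),
          E p ⊆ dyad p ∧ ((2 : ℝ) ^ p.1) / 2 < (E p).card) ∧
        ((↑(S.filter (fun p => c p = i)) : Set (ℕ × ℤ)).Pairwise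
          fun p q => Disjoint (E p) (E q)) := by
  classical
  set M := ⌈2 * Λ⌉₊ with hM
  have hMle : 2 * Λ ≤ (M : ℝ) := Nat.le_ceil _
  have hMpos : 0 < M := Nat.ceil_pos.mpr (by linarith)
  set r : ℕ × ℤ → ℕ := fun p => (S.filter (fun t => dyad p ⊂ dyad t)).card with hr
  refine ⟨fun p => r p % M, fun p _ => Nat.mod_lt _ hMpos, ?_⟩
  intro i
  set T := S.filter (fun p => r p % M = i) with hT
  have hTS : T ⊆ S := Finset.filter_subset _ _
  -- ancestor monotonicity
  have h_anc : ∀ p ∈ S, ∀ q : ℕ × ℤ, dyad q ⊂ dyad p → r q ≥ r p + 1 := by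
    intro p hp q hqp
    have hsub : insert p (S.filter (fun t => dyad p ⊂ dyad t)) ⊆
        S.filter (fun t => dyad q ⊂ dyad t) := by
      intro t ht
      rcases Finset.mem_insert.mp ht with rfl | ht
      · exact Finset.mem_filter.mpr ⟨hp, hqp⟩
      · rw [Finset.mem_filter] at ht ⊢
        exact ⟨ht.1, hqp.trans ht.2⟩
    have hnp : p ∉ S.filter (fun t => dyad p ⊂ dyad t) := by
      rw [Finset.mem_filter]; rintro ⟨-, hh⟩; exact (ssubset_irrefl _) hh
    calc r p + 1 = (insert p (S.filter (fun t => dyad p ⊂ dyad t))).card := by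
          rw [Finset.card_insert_of_notMem hnp]
      _ ≤ r q := Finset.card_le_card hsub
  -- gap within a color class
  have h_gap : ∀ p ∈ T, ∀ q ∈ T, dyad q ⊂ dyad p → r p + M ≤ r q := by
    intro p hp q hq hqp
    have hp' := Finset.mem_filter.mp hp
    have hq' := Finset.mem_filter.mp hq
    have hlt : r p < r q := h_anc p hp'.1 q hqp
    have hmod : r p % M = r q % M := by rw [hp'.2, hq'.2]
    have hdvd : M ∣ r q - r p := (Nat.modEq_iff_dvd' hlt.le).mp hmod
    obtain ⟨c, hc⟩ := hdvd
    rcases c with - | c'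
    · omega
    · have : M ≤ M * (c' + 1) := Nat.le_mul_of_pos_right _ (by omega)
      omega
  set D : ℕ × ℤ → Finset (ℕ × ℤ) := fun p => T.filter (fun q => dyad q ⊂ dyad p) with hD
  set Mx : ℕ × ℤ → Finset (ℕ × ℤ) :=
    fun p => (D p).filter (fun q => ∀ t ∈ D p, ¬ dyad q ⊂ dyad t) with hMx
  refine ⟨fun p => dyad p \ (Mx p).biUnion dyad, ?_, ?_⟩
  · -- size bound
    intro p hp
    refine ⟨Finset.sdiff_subset, ?_⟩
    have hpS : p ∈ S := (Finset.mem_filter.mp hp).1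
    -- maximal elements have pairwise disjoint dyads
    have hdisj : ∀ q ∈ Mx p, ∀ q' ∈ Mx p, q ≠ q' → Disjoint (dyad q) (dyad q') := by
      intro q hq q' hq' hne
      have hq1 := Finset.mem_filter.mp hq
      have hq1' := Finset.mem_filter.mp hq'
      rcases dyad_tri q q' with h | h | h
      · rcases eq_or_ne (dyad q) (dyad q') with he | hne'
        · exact absurd (dyad_inj he) hne
        · exact absurd (Finset.ssubset_iff_subset_ne.mpr ⟨h, hne'⟩) (hq1.2 q' hq1'.1)
      · rcases eq_or_ne (dyad q') (dyad q) with he | hne'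
        · exact absurd (dyad_inj he).symm hne
        · exact absurd (Finset.ssubset_iff_subset_ne.mpr ⟨h, hne'⟩) (hq1'.2 q hq1.1)
      · exact h
    -- each maximal q has many intermediate intervals
    have hB : ∀ q ∈ Mx p, M + 1 ≤
        ((S.filter (fun t => dyad t ⊆ dyad p)).filter (fun t => dyad q ⊆ dyad t)).card := by
      intro q hq
      have hqD := (Finset.mem_filter.mp hq).1
      have hqD' := Finset.mem_filter.mp hqD
      have hqT : q ∈ T := hqD'.1
      have hqp : dyad q ⊂ dyad p := hqD'.2
      have hgap := h_gap p hp q hqT hqp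
      -- A p ⊆ A q
      have hApq : S.filter (fun t => dyad p ⊂ dyad t) ⊆ S.filter (fun t => dyad q ⊂ dyad t) := by
        intro t ht
        rw [Finset.mem_filter] at ht ⊢
        exact ⟨ht.1, hqp.trans ht.2⟩
      have hsub : insert q ((S.filter (fun t => dyad q ⊂ dyad t)) \
            (S.filter (fun t => dyad p ⊂ dyad t))) ⊆
          (S.filter (fun t => dyad t ⊆ dyad p)).filter (fun t => dyad q ⊆ dyad t) := by
        intro t ht
        rcases Finset.mem_insert.mp ht with rfl | ht
        · exact Finset.mem_filter.mpr ⟨Finset.mem_filter.mpr ⟨hTS hqT, hqp.subset⟩, subset_rfl⟩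
        · obtain ⟨ht1, ht2⟩ := Finset.mem_sdiff.mp ht
          obtain ⟨htS, htq⟩ := Finset.mem_filter.mp ht1
          have htp : ¬ dyad p ⊂ dyad t := by
            intro hh; exact ht2 (Finset.mem_filter.mpr ⟨htS, hh⟩)
          have htsub : dyad t ⊆ dyad p := by
            rcases dyad_tri t p with h | h | h
            · exact h
            · rcases eq_or_ne (dyad p) (dyad t) with he | hne'
              · exact he ▸ subset_rfl
              · exact absurd (Finset.ssubset_iff_subset_ne.mpr ⟨h, hne'⟩) htp
            · exfalso
              obtain ⟨x, hx⟩ := dyad_nonempty q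
              exact Finset.disjoint_left.mp h (htq.subset hx) (hqp.subset hx)
          exact Finset.mem_filter.mpr ⟨Finset.mem_filter.mpr ⟨htS, htsub⟩, htq.subset⟩
      have hqnot : q ∉ (S.filter (fun t => dyad q ⊂ dyad t)) \
          (S.filter (fun t => dyad p ⊂ dyad t)) := by
        rw [Finset.mem_sdiff, Finset.mem_filter]
        rintro ⟨⟨-, hh⟩, -⟩; exact (ssubset_irrefl _) hh
      have hcard1 : (insert q ((S.filter (fun t => dyad q ⊂ dyad t)) \
          (S.filter (fun t => dyad p ⊂ dyad t)))).card = (r q - r p) + 1 := by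
        rw [Finset.card_insert_of_notMem hqnot, Finset.card_sdiff_of_subset hApq]
      have := Finset.card_le_card hsub
      rw [hcard1] at this
      omega
    -- counting argument
    set Sp := S.filter (fun t => dyad t ⊆ dyad p) with hSp
    have hswap : (M + 1) * ∑ q ∈ Mx p, 2 ^ q.1 ≤ ∑ t ∈ Sp, 2 ^ t.1 := by
      calc (M + 1) * ∑ q ∈ Mx p, 2 ^ q.1 = ∑ q ∈ Mx p, (M + 1) * 2 ^ q.1 := by
            rw [Finset.mul_sum]
        _ ≤ ∑ q ∈ Mx p, (Sp.filter (fun t => dyad q ⊆ dyad t)).card * 2 ^ q.1 :=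
            Finset.sum_le_sum (fun q hq => Nat.mul_le_mul_right _ (hB q hq))
        _ = ∑ q ∈ Mx p, ∑ t ∈ Sp, (if dyad q ⊆ dyad t then 2 ^ q.1 else 0) := by
            refine Finset.sum_congr rfl fun q hq => ?_
            rw [← Finset.sum_filter, Finset.sum_const, smul_eq_mul]
        _ = ∑ t ∈ Sp, ∑ q ∈ Mx p, (if dyad q ⊆ dyad t then 2 ^ q.1 else 0) := Finset.sum_comm
        _ ≤ ∑ t ∈ Sp, 2 ^ t.1 := by
            refine Finset.sum_le_sum fun t ht => ?_
            rw [← Finset.sum_filter]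
            calc ∑ q ∈ (Mx p).filter (fun q => dyad q ⊆ dyad t), 2 ^ q.1
                = ∑ q ∈ (Mx p).filter (fun q => dyad q ⊆ dyad t), (dyad q).card :=
                  Finset.sum_congr rfl fun q _ => (dyad_card q).symm
              _ = (((Mx p).filter (fun q => dyad q ⊆ dyad t)).biUnion dyad).card :=
                  (Finset.card_biUnion (fun q hq q' hq' hne =>
                    hdisj q (Finset.mem_of_mem_filter _ hq) q'
                      (Finset.mem_of_mem_filter _ hq') hne)).symm
              _ ≤ (dyad t).card := Finset.card_le_card
                  (Finset.biUnion_subset.mpr fun q hq => (Finset.mem_filter.mp hq).2)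
              _ = 2 ^ t.1 := dyad_card t
    have hcarl := hCarleson p hpS
    have hcast : ((∑ t ∈ Sp, 2 ^ t.1 : ℕ) : ℝ) = ∑ t ∈ Sp, ((2:ℝ) ^ t.1) := by
      push_cast; rfl
    set N : ℕ := ∑ q ∈ Mx p, 2 ^ q.1 with hN
    have hNR : ((M + 1 : ℕ) : ℝ) * N ≤ Λ * 2 ^ p.1 := by
      have h1 : (((M + 1) * N : ℕ) : ℝ) ≤ ((∑ t ∈ Sp, 2 ^ t.1 : ℕ) : ℝ) := by
        exact_mod_cast hswap
      rw [hcast] at h1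
      push_cast at h1 ⊢
      linarith
    have hU : ((Mx p).biUnion dyad).card ≤ N := by
      calc ((Mx p).biUnion dyad).card ≤ ∑ q ∈ Mx p, (dyad q).card := Finset.card_biUnion_le
        _ = N := Finset.sum_congr rfl fun q _ => dyad_card q
    have hEcard : (dyad p).card ≤ (dyad p \ (Mx p).biUnion dyad).card + N := by
      calc (dyad p).card ≤ (dyad p \ (Mx p).biUnion dyad).card + ((Mx p).biUnion dyad).card :=
            Finset.card_le_card_sdiff_add_card
        _ ≤ _ := by omega
    rw [dyad_card] at hEcard
    have hc1 : ((2:ℝ) ^ p.1) ≤ ((dyad p \ (Mx p).biUnion dyad).card : ℝ) + (N : ℝ) := by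
      exact_mod_cast hEcard
    have hpos : (0:ℝ) < 2 ^ p.1 := by positivity
    have hNnn : (0:ℝ) ≤ N := Nat.cast_nonneg _
    push_cast at hNR
    nlinarith [hNR, hMle, hc1, hpos, hNnn]
  · intro p hp p' hp' hne
    have hpT : p ∈ T := by exact_mod_cast hp
    have hpT' : p' ∈ T := by exact_mod_cast hp'
    rcases dyad_tri p p' with h | h | h
    · rcases eq_or_ne (dyad p) (dyad p') with he | hne'
      · exact absurd (dyad_inj he) hne
      · have hss : dyad p ⊂ dyad p' := Finset.ssubset_iff_subset_ne.mpr ⟨h, hne'⟩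
        have hpD : p ∈ D p' := Finset.mem_filter.mpr ⟨hpT, hss⟩
        obtain ⟨m, hm, hsub, hmax⟩ := exists_max_above (D p') p hpD
        have hmMx : m ∈ Mx p' := Finset.mem_filter.mpr ⟨hm, hmax⟩
        have hEp : dyad p \ (Mx p).biUnion dyad ⊆ (Mx p').biUnion dyad :=
          Finset.sdiff_subset.trans (hsub.trans (Finset.subset_biUnion_of_mem dyad hmMx))
        exact (Finset.sdiff_disjoint.mono_right hEp).symm
    · rcases eq_or_ne (dyad p') (dyad p) with he | hne'
      · exact absurd (dyad_inj he).symm hne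
      · have hss : dyad p' ⊂ dyad p := Finset.ssubset_iff_subset_ne.mpr ⟨h, hne'⟩
        have hpD : p' ∈ D p := Finset.mem_filter.mpr ⟨hpT', hss⟩
        obtain ⟨m, hm, hsub, hmax⟩ := exists_max_above (D p) p' hpD
        have hmMx : m ∈ Mx p := Finset.mem_filter.mpr ⟨hm, hmax⟩
        have hEp : dyad p' \ (Mx p').biUnion dyad ⊆ (Mx p).biUnion dyad :=
          Finset.sdiff_subset.trans (hsub.trans (Finset.subset_biUnion_of_mem dyad hmMx))
        exact Finset.sdiff_disjoint.mono_right hEp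
    · exact h.mono Finset.sdiff_subset Finset.sdiff_subset
end
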